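/- A semigroup with zero (S,·,o) satisfies S^{n+1} = {o} (every product of n+1 elements equals o) if and only if for every polynomial p(x₁,…,xₙ,y̅) of (S,·,o) and all elements a₁,…,aₙ,b₁,…,bₙ and tuples c,d: whenever p(v(x₁),…,v(xₙ),c) = p(v(x₁),…,v(xₙ),d) for all valuations v ∈ Πᵢ{aᵢ,bᵢ} except the all-b valuation, also p(b₁,…,bₙ,c) = p(b₁,…,bₙ,d). (n-supernilpotency of a semigroup with zero.) -/

import Mathlib

/-- Product of the `n+1` elements `f 0 * f 1 * ⋯ * f n` (no unit needed). -/
def finProd {S : Type*} [Mul S] : {n : ℕ} → (Fin (n + 1) → S) → S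
  | 0, f => f 0
  | _ + 1, f => f 0 * finProd (fun i => f i.succ)

/-- Polynomial functions of a semigroup with zero `(S,·,0)`: generated from
projections and constants by pointwise `*`. -/
inductive IsMulPolyFn (S : Type*) [Mul S] (ι : Type*) : ((ι → S) → S) → Prop
  | proj (i : ι) : IsMulPolyFn S ι (fun x => x i)
  | const (c : S) : IsMulPolyFn S ι (fun _ => c)
  | mul {p q} : IsMulPolyFn S ι p → IsMulPolyFn S ι q → IsMulPolyFn S ι (fun x => p x * q x)

namespace SupernilAux

variable {S : Type*} {ι : Type*}

/-- Product of a nonempty list, given head and tail. -/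
def lprod [Mul S] (a : S) (l : List S) : S := l.foldl (· * ·) a

@[simp] lemma lprod_nil [Mul S] (a : S) : lprod a [] = a := rfl

@[simp] lemma lprod_cons [Mul S] (a x : S) (l : List S) :
    lprod a (x :: l) = lprod (a * x) l := rfl

lemma mul_lprod [Semigroup S] (l : List S) : ∀ a x : S,
    a * lprod x l = lprod (a * x) l := by
  induction l with
  | nil => intro a x; rfl
  | cons h t ih =>
    intro a x
    simp only [lprod_cons]
    rw [← ih, ← ih, mul_assoc]

lemma lprod_append [Semigroup S] (l₁ : List S) : ∀ (a x : S) (l₂ : List S),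
    lprod a (l₁ ++ x :: l₂) = lprod a l₁ * lprod x l₂ := by
  induction l₁ with
  | nil => intro a x l₂; simp [mul_lprod]
  | cons h t ih => intro a x l₂; simpa using ih (a * h) x l₂

lemma finProd_one [Mul S] (f : Fin 1 → S) : finProd f = f 0 := rfl

lemma finProd_succ [Mul S] {k : ℕ} (f : Fin (k + 2) → S) :
    finProd f = f 0 * finProd (fun i => f i.succ) := rfl

lemma finProd_eq [Semigroup S] : ∀ {k : ℕ} (f : Fin (k + 1) → S),
    finProd f = lprod (f 0) (List.ofFn (fun i : Fin k => f i.succ))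
  | 0, f => rfl
  | k + 1, f => by
    rw [show finProd f = f 0 * finProd (fun i => f i.succ) from rfl,
      finProd_eq (fun i => f i.succ), List.ofFn_succ]
    exact mul_lprod _ _ _

lemma finProd_cons_get [Semigroup S] (a : S) (l : List S) :
    finProd (Fin.cons a l.get : Fin (l.length + 1) → S) = lprod a l := by
  rw [finProd_eq]
  simp [Fin.cons_succ, Fin.cons_zero, List.ofFn_get]

lemma finProd_eq_zero [MulZeroClass S] :
    ∀ {k : ℕ} (f : Fin (k + 1) → S) (j : Fin (k + 1)), f j = 0 → finProd f = 0
  | 0, f, j, h => by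
    have hj : j = 0 := Fin.eq_zero j
    rw [show finProd f = f 0 from rfl, ← hj, h]
  | k + 1, f, j, h => by
    rw [show finProd f = f 0 * finProd (fun i => f i.succ) from rfl]
    rcases Fin.eq_zero_or_eq_succ j with rfl | ⟨i, rfl⟩
    · rw [h, zero_mul]
    · rw [finProd_eq_zero (fun i => f i.succ) i h, mul_zero]

lemma finProd_snoc [Semigroup S] : ∀ {k : ℕ} (g : Fin (k + 1) → S) (x : S),
    finProd (Fin.snoc g x) = finProd g * x
  | 0, g, x => by
    have h0 : (Fin.snoc g x : Fin 2 → S) 0 = g 0 := Fin.snoc_castSucc (i := 0) ..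
    have h1 : (Fin.snoc g x : Fin 2 → S) (Fin.succ 0) = x := Fin.snoc_last ..
    rw [finProd_succ, finProd_one, finProd_one, h0, h1]
  | k + 1, g, x => by
    have htail : (fun i : Fin (k + 2) => (Fin.snoc g x : Fin (k + 3) → S) i.succ)
        = (Fin.snoc (fun i : Fin (k + 1) => g i.succ) x : Fin (k + 2) → S) := by
      funext i
      induction i using Fin.lastCases with
      | last => simp [Fin.succ_last]
      | cast j => rw [Fin.succ_castSucc, Fin.snoc_castSucc, Fin.snoc_castSucc]
    have h0 : (Fin.snoc g x : Fin (k + 3) → S) 0 = g 0 := Fin.snoc_castSucc (i := 0) ..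
    rw [finProd_succ, htail, finProd_snoc, ← mul_assoc, finProd_succ, h0]

lemma isPoly_prod [Mul S] : ∀ (k : ℕ) (e : Fin (k + 1) → ι),
    IsMulPolyFn S ι (fun x => finProd (fun i => x (e i)))
  | 0, e => .proj (e 0)
  | k + 1, e => .mul (.proj (e 0)) (isPoly_prod k (fun i => e i.succ))

/-- Evaluate a letter (a projection index or a constant). -/
def eval1 (x : ι → S) : ι ⊕ S → S := Sum.elim x id

/-- Normal form: every polynomial function is the product of a nonempty word of
projections and constants. -/
lemma normal [Semigroup S] {p : (ι → S) → S} (hp : IsMulPolyFn S ι p) :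
    ∃ (t : ι ⊕ S) (l : List (ι ⊕ S)),
      ∀ x, p x = lprod (eval1 x t) (l.map (eval1 x)) := by
  induction hp with
  | proj i => exact ⟨.inl i, [], fun x => rfl⟩
  | const c => exact ⟨.inr c, [], fun x => rfl⟩
  | mul hp hq ihp ihq =>
    obtain ⟨t₁, l₁, h₁⟩ := ihp
    obtain ⟨t₂, l₂, h₂⟩ := ihq
    refine ⟨t₁, l₁ ++ t₂ :: l₂, fun x => ?_⟩
    simp only [h₁, h₂, List.map_append, List.map_cons, lprod_append]

end SupernilAux

open SupernilAux in
/-- A semigroup with zero satisfies `S^{n+1} = {0}` iff it satisfies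
the `(n+1)`-ary term condition `C(1,…,1;0)` (is `n`-supernilpotent), for `n ≥ 1`. -/
theorem semigroup_supernilpotent_iff {S : Type*} [SemigroupWithZero S]
    (n : ℕ) (hn : 1 ≤ n) :
    (∀ f : Fin (n + 1) → S, finProd f = 0) ↔
      (∀ (m : ℕ) (p : ((Fin n ⊕ Fin m) → S) → S), IsMulPolyFn S (Fin n ⊕ Fin m) p →
        ∀ (a b : Fin n → S) (c d : Fin m → S),
          (∀ v : Fin n → Bool, v ≠ (fun _ => true) →
            p (Sum.elim (fun i => if v i then b i else a i) c) =
              p (Sum.elim (fun i => if v i then b i else a i) d)) →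
          p (Sum.elim b c) = p (Sum.elim b d)) := by
  constructor
  · -- S^{n+1} = 0  →  term condition
    intro hyp m p hp a b c d hv
    classical
    obtain ⟨t, l, hw⟩ := normal hp
    -- all products of length ≥ n+1 vanish (list form)
    have key0 : ∀ l' : List S, l'.length = n → ∀ a' : S, lprod a' l' = 0 := by
      intro l' h a'
      subst h
      have := hyp (Fin.cons a' l'.get)
      rwa [finProd_cons_get] at this
    have key : ∀ l' : List S, n ≤ l'.length → ∀ a' : S, lprod a' l' = 0 := by
      intro l'
      induction l' with
      | nil => intro h; simp at h; omega
      | cons x tl ih =>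
        intro h a'
        rcases eq_or_lt_of_le h with heq | hlt
        · exact key0 _ heq.symm a'
        · have htl : n ≤ tl.length := by
            simp only [List.length_cons] at hlt; omega
          rw [lprod_cons]; exact ih htl _
    rcases Classical.em (∃ j : Fin n, (Sum.inl (Sum.inl j) : (Fin n ⊕ Fin m) ⊕ S) ∉ t :: l) with hmiss | hmiss
    · -- some variable xⱼ does not occur: use the valuation flipping only j
      obtain ⟨j, hj⟩ := hmiss
      set v : Fin n → Bool := fun i => decide (i ≠ j) with hv'
      have hvne : v ≠ fun _ => true := by
        intro h
        have := congrFun h j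
        simp [hv'] at this
      have congrX : ∀ c' : Fin m → S,
          p (Sum.elim (fun i => if v i then b i else a i) c') = p (Sum.elim b c') := by
        intro c'
        have hlet : ∀ u ∈ t :: l,
            eval1 (Sum.elim (fun i => if v i then b i else a i) c') u
              = eval1 (Sum.elim b c') u := by
          intro u hu
          match u with
          | .inl (.inl i) =>
            have hij : i ≠ j := fun h => hj (h ▸ hu)
            simp [eval1, hv', hij]
          | .inl (.inr k) => rfl
          | .inr s => rfl
        rw [hw, hw, hlet t List.mem_cons_self,
          List.map_congr_left (fun u hu => hlet u (List.mem_cons_of_mem _ hu))]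
      calc p (Sum.elim b c)
          = p (Sum.elim (fun i => if v i then b i else a i) c) := (congrX c).symm
        _ = p (Sum.elim (fun i => if v i then b i else a i) d) := hv v hvne
        _ = p (Sum.elim b d) := congrX d
    · push_neg at hmiss
      rcases Classical.em (∃ k : Fin m, (Sum.inl (Sum.inr k) : (Fin n ⊕ Fin m) ⊕ S) ∈ t :: l) with hbad | hbad
      · -- all variables occur and some y occurs: word length ≥ n+1, so p ≡ 0
        obtain ⟨k, hk⟩ := hbad
        have hcard : n + 1 ≤ (t :: l).length := by
          have hsub : insert (Sum.inl (Sum.inr k) : (Fin n ⊕ Fin m) ⊕ S)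
              ((Finset.univ : Finset (Fin n)).image
                (fun i => (Sum.inl (Sum.inl i) : (Fin n ⊕ Fin m) ⊕ S)))
              ⊆ (t :: l).toFinset := by
            intro u hu
            rw [Finset.mem_insert] at hu
            rcases hu with rfl | hu
            · exact List.mem_toFinset.mpr hk
            · obtain ⟨i, -, rfl⟩ := Finset.mem_image.mp hu
              exact List.mem_toFinset.mpr (hmiss i)
          have hc1 : (insert (Sum.inl (Sum.inr k) : (Fin n ⊕ Fin m) ⊕ S)
              ((Finset.univ : Finset (Fin n)).image
                (fun i => (Sum.inl (Sum.inl i) : (Fin n ⊕ Fin m) ⊕ S)))).card = n + 1 := by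
            rw [Finset.card_insert_of_notMem]
            · rw [Finset.card_image_of_injective _
                (fun i j h => by simpa using h)]
              simp
            · intro hmem
              obtain ⟨i, -, h⟩ := Finset.mem_image.mp hmem
              simp at h
          calc n + 1 = _ := hc1.symm
            _ ≤ (t :: l).toFinset.card := Finset.card_le_card hsub
            _ ≤ (t :: l).length := (t :: l).toFinset_card_le
        have hlen : n ≤ l.length := by
          simp only [List.length_cons] at hcard; omega
        have hz : ∀ x, p x = 0 := by
          intro x
          rw [hw]
          exact key _ (by simpa using hlen) _
        rw [hz, hz]
      · -- no y occurs: p depends only on the x-part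
        push_neg at hbad
        have hlet : ∀ u ∈ t :: l,
            eval1 (Sum.elim b c) u = eval1 (Sum.elim b d) u := by
          intro u hu
          match u with
          | .inl (.inl i) => rfl
          | .inl (.inr k) => exact absurd hu (hbad k)
          | .inr s => rfl
        rw [hw, hw, hlet t List.mem_cons_self,
          List.map_congr_left (fun u hu => hlet u (List.mem_cons_of_mem _ hu))]
  · -- term condition → S^{n+1} = 0
    intro H f
    obtain ⟨m', rfl⟩ : ∃ m', n = m' + 1 := ⟨n - 1, by omega⟩
    have hpoly : IsMulPolyFn S (Fin (m' + 1) ⊕ Fin 1)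
        (fun x => finProd (fun i : Fin (m' + 1) => x (Sum.inl i)) * x (Sum.inr 0)) :=
      .mul (isPoly_prod m' Sum.inl) (.proj (Sum.inr 0))
    have hprem : ∀ v : Fin (m' + 1) → Bool, v ≠ (fun _ => true) →
        (fun x => finProd (fun i : Fin (m' + 1) => x (Sum.inl i)) * x (Sum.inr 0))
          (Sum.elim (fun i => if v i then Fin.init f i else (fun _ => (0:S)) i)
            (fun _ => f (Fin.last (m' + 1)))) =
        (fun x => finProd (fun i : Fin (m' + 1) => x (Sum.inl i)) * x (Sum.inr 0))
          (Sum.elim (fun i => if v i then Fin.init f i else (fun _ => (0:S)) i)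
            (fun _ => (0:S))) := by
      intro v hvne
      obtain ⟨j, hj⟩ : ∃ j, v j = false := by
        obtain ⟨j, hj⟩ := Function.ne_iff.mp hvne
        exact ⟨j, by simpa using hj⟩
      have hz : finProd (fun i : Fin (m' + 1) =>
          if v i then Fin.init f i else (0:S)) = 0 := by
        apply finProd_eq_zero _ j
        simp [hj]
      simp only [Sum.elim_inl, Sum.elim_inr]
      rw [hz, zero_mul, zero_mul]
    have := H 1 _ hpoly (fun _ => 0) (Fin.init f)
      (fun _ => f (Fin.last (m' + 1))) (fun _ => 0) hprem
    simp only [Sum.elim_inl, Sum.elim_inr, mul_zero] at this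
    calc finProd f = finProd (Fin.snoc (Fin.init f) (f (Fin.last (m' + 1)))) := by
          rw [Fin.snoc_init_self]
      _ = finProd (Fin.init f) * f (Fin.last (m' + 1)) := finProd_snoc _ _
      _ = 0 := this
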